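/- Let φ, θ, z be real numbers and let q be the quaternion q = cos(φ/2)cos(z/2) + sin(φ/2)cos(θ − z/2)·i + sin(φ/2)sin(θ − z/2)·j + cos(φ/2)sin(z/2)·k. Then q · k · (conj q) = sin φ · sin θ · i − sin φ · cos θ · j + cos φ · k. (This computes the Hopf-fibration projection of the element of SU(2) with cylindrical coordinates (φ, θ, z): it lands on the point of S² with spherical coordinates (φ, θ).) -/

import Mathlib

open scoped Quaternion

/-- The Hopf-fibration projection of the element of `SU(2)` with cylindrical
coordinates `(φ, θ, z)`, computed with quaternions: with
`q = cos(φ/2)cos(z/2) + sin(φ/2)cos(θ−z/2)·i + sin(φ/2)sin(θ−z/2)·j + cos(φ/2)sin(z/2)·k`,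
one has `q · k · q* = sin φ sin θ · i − sin φ cos θ · j + cos φ · k`. -/
theorem hopf_projection_cylindrical (φ θ z : ℝ) :
    (⟨Real.cos (φ / 2) * Real.cos (z / 2), Real.sin (φ / 2) * Real.cos (θ - z / 2),
        Real.sin (φ / 2) * Real.sin (θ - z / 2), Real.cos (φ / 2) * Real.sin (z / 2)⟩ : ℍ[ℝ]) *
        (⟨0, 0, 0, 1⟩ : ℍ[ℝ]) *
        star (⟨Real.cos (φ / 2) * Real.cos (z / 2), Real.sin (φ / 2) * Real.cos (θ - z / 2),
          Real.sin (φ / 2) * Real.sin (θ - z / 2), Real.cos (φ / 2) * Real.sin (z / 2)⟩ : ℍ[ℝ]) =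
      (⟨0, Real.sin φ * Real.sin θ, -(Real.sin φ * Real.cos θ), Real.cos φ⟩ : ℍ[ℝ]) := by
  have h1 : Real.sin φ = 2 * Real.sin (φ/2) * Real.cos (φ/2) := by
    rw [← Real.sin_two_mul]; ring_nf
  have h2 : Real.cos φ = 2 * Real.cos (φ/2) ^ 2 - 1 := by
    rw [← Real.cos_two_mul]; ring_nf
  have hs : Real.sin θ = Real.sin (θ - z/2) * Real.cos (z/2) + Real.cos (θ - z/2) * Real.sin (z/2) := by
    rw [← Real.sin_add]; ring_nf
  have hc : Real.cos θ = Real.cos (θ - z/2) * Real.cos (z/2) - Real.sin (θ - z/2) * Real.sin (z/2) := by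
    rw [← Real.cos_add]; ring_nf
  ext <;>
  simp only [Quaternion.re_mul, Quaternion.imI_mul, Quaternion.imJ_mul,
    Quaternion.imK_mul, QuaternionAlgebra.star_mk, QuaternionAlgebra.mk_mul_mk, h1, h2, hs, hc] <;>
  nlinarith [Real.sin_sq_add_cos_sq (φ/2), Real.sin_sq_add_cos_sq (z/2),
    Real.sin_sq_add_cos_sq (θ - z/2)]
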